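/- Let E be a finite-dimensional real inner product space and let f : E → ℝ be a convex Lipschitz function. Then the following are equivalent: (i) slope_f(v) > 0 for every unit vector v ∈ E; (ii) every sublevel set {x ∈ E : f(x) ≤ a}, a ∈ ℝ, is bounded (equivalently compact). In particular, if slope_f > 0 on all unit vectors then f is proper and bounded below and attains its infimum. -/

import Mathlib

open Filter

/-- For a convex Lipschitz function `f` on a finite-dimensional real inner
product space: the asymptotic slope is positive in all unit directions iff all
sublevel sets are bounded (equivalently compact); in that case `f` is bounded
below and attains its infimum. -/
theorem asymptotic_slope_positive_iff_proper
    {E : Type*} [NormedAddCommGroup E] [InnerProductSpace ℝ E]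
    [FiniteDimensional ℝ E]
    (f : E → ℝ) (hconv : ConvexOn ℝ Set.univ f)
    (C : NNReal) (hlip : LipschitzWith C f)
    (s : E → ℝ)
    (hs : ∀ v : E, Tendsto (fun t : ℝ => f (t • v) / t) atTop (nhds (s v))) :
    ((∀ v : E, ‖v‖ = 1 → 0 < s v) ↔
        ∀ a : ℝ, Bornology.IsBounded {x : E | f x ≤ a}) ∧
    ((∀ v : E, ‖v‖ = 1 → 0 < s v) ↔
        ∀ a : ℝ, IsCompact {x : E | f x ≤ a}) ∧
    ((∀ v : E, ‖v‖ = 1 → 0 < s v) → ∃ x : E, ∀ z : E, f x ≤ f z) := by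
  have hfc : Continuous f := hlip.continuous
  set g : ℝ → E → ℝ := fun t v => (f (t • v) - f 0) / t with hgdef
  -- each section t ↦ f (t • v) is convex
  have hconv1 : ∀ v : E, ConvexOn ℝ Set.univ (fun t : ℝ => f (t • v)) := by
    intro v
    have := hconv.comp_affineMap (LinearMap.toSpanSingleton ℝ E v).toAffineMap
    simpa [Function.comp_def] using this
  -- monotonicity of the slope from 0
  have hmono : ∀ v : E, ∀ t₁ t₂ : ℝ, 0 < t₁ → t₁ ≤ t₂ → g t₁ v ≤ g t₂ v := by
    intro v t₁ t₂ ht₁ h12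
    have := (hconv1 v).secant_mono (a := 0) (x := t₁) (y := t₂)
      (Set.mem_univ _) (Set.mem_univ _) (Set.mem_univ _)
      (ne_of_gt ht₁) (ne_of_gt (lt_of_lt_of_le ht₁ h12)) h12
    simpa [hgdef] using this
  -- g t v → s v as t → ∞
  have hgs : ∀ v : E, Tendsto (fun t => g t v) atTop (nhds (s v)) := by
    intro v
    have h1 : Tendsto (fun t : ℝ => f (t • v) / t - f 0 / t) atTop (nhds (s v - 0)) :=
      (hs v).sub (tendsto_const_div_atTop_nhds_zero_nat (f 0) |>.comp tendsto_natCast_atTop_atTop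
        |> fun _ => Tendsto.div_atTop tendsto_const_nhds tendsto_id)
    have h1 : Tendsto (fun t : ℝ => f (t • v) / t - f 0 / t) atTop (nhds (s v - 0)) :=
      (hs v).sub (Tendsto.div_atTop tendsto_const_nhds tendsto_id)
    simpa [hgdef, sub_div] using h1
  -- slope from 0 is below the asymptotic slope
  have hle : ∀ v : E, ∀ t : ℝ, 0 < t → g t v ≤ s v := by
    intro v t ht
    exact ge_of_tendsto (hgs v)
      (eventually_atTop.2 ⟨t, fun t' ht' => hmono v t t' ht ht'⟩)
  -- key: positive slopes imply bounded sublevel sets, with a linear lower bound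
  have key : (∀ v : E, ‖v‖ = 1 → 0 < s v) →
      ∀ a : ℝ, Bornology.IsBounded {x : E | f x ≤ a} := by
    intro hpos a
    rcases subsingleton_or_nontrivial E with hE | hE
    · haveI : Finite E := Finite.of_subsingleton
      exact (Set.toFinite _).isBounded
    · -- compactness argument on the unit sphere
      set S : Set E := Metric.sphere (0 : E) 1 with hS
      have hScomp : IsCompact S := isCompact_sphere 0 1
      -- open cover
      have hcover : S ⊆ ⋃ t : ℝ, {v : E | 0 < g (max t 1) v} := by
        intro v hv
        have hnorm : ‖v‖ = 1 := mem_sphere_zero_iff_norm.1 hv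
        have hev : ∀ᶠ t in atTop, 0 < g t v :=
          (hgs v).eventually (eventually_gt_nhds (hpos v hnorm))
        obtain ⟨t, ht1, htpos⟩ := ((eventually_ge_atTop (1 : ℝ)).and hev).exists
        refine Set.mem_iUnion.2 ⟨t, ?_⟩
        simpa [max_eq_left ht1] using htpos
      have hopen : ∀ t : ℝ, IsOpen {v : E | 0 < g (max t 1) v} := by
        intro t
        have hcont : Continuous (g (max t 1)) :=
          ((hfc.comp (continuous_const_smul _)).sub continuous_const).div_const _
        exact isOpen_lt continuous_const hcont
      obtain ⟨F, hF⟩ := hScomp.elim_finite_subcover _ hopen hcover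
      set T : ℝ := 1 + ∑ t ∈ F, |t| with hT
      have hT1 : (1 : ℝ) ≤ T := by
        have : (0 : ℝ) ≤ ∑ t ∈ F, |t| := Finset.sum_nonneg fun t _ => abs_nonneg t
        linarith
      have hTge : ∀ t ∈ F, max t 1 ≤ T := by
        intro t htF
        have h1 : |t| ≤ ∑ t' ∈ F, |t'| :=
          Finset.single_le_sum (fun t' _ => abs_nonneg t') htF
        have h2 : t ≤ T := by
          have := le_abs_self t; simp only [hT]; linarith
        exact max_le h2 hT1
      have hgT : ∀ v ∈ S, 0 < g T v := by
        intro v hv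
        obtain ⟨t, htF, htv⟩ := Set.mem_iUnion₂.1 (hF hv)
        have h1 : (0 : ℝ) < max t 1 := lt_of_lt_of_le one_pos (le_max_right _ _)
        exact lt_of_lt_of_le htv (hmono v _ T h1 (hTge t htF))
      -- minimum of g T over the sphere
      have hSne : S.Nonempty := NormedSpace.sphere_nonempty.2 zero_le_one
      have hcontT : Continuous (g T) :=
        ((hfc.comp (continuous_const_smul _)).sub continuous_const).div_const _
      obtain ⟨v₀, hv₀S, hv₀min⟩ := hScomp.exists_isMinOn hSne hcontT.continuousOn
      set δ : ℝ := g T v₀ with hδ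
      have hδpos : 0 < δ := hgT v₀ hv₀S
      -- linear lower bound for f outside the ball of radius T
      have hlb : ∀ x : E, T ≤ ‖x‖ → f 0 + δ * ‖x‖ ≤ f x := by
        intro x hx
        have hxpos : (0 : ℝ) < ‖x‖ := lt_of_lt_of_le (lt_of_lt_of_le one_pos hT1) hx
        have hxne : x ≠ 0 := by
          intro h; rw [h, norm_zero] at hxpos; exact lt_irrefl 0 hxpos
        set v : E := ‖x‖⁻¹ • x with hv
        have hvnorm : ‖v‖ = 1 := by
          rw [hv, norm_smul, norm_inv, norm_norm, inv_mul_cancel₀ (ne_of_gt hxpos)]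
        have hvS : v ∈ S := by simpa [hS] using hvnorm
        have h1 : δ ≤ g ‖x‖ v :=
          le_trans (hv₀min hvS) (hmono v T ‖x‖ (lt_of_lt_of_le one_pos hT1) hx)
        have hxv : ‖x‖ • v = x := by
          rw [hv, smul_smul, mul_inv_cancel₀ (ne_of_gt hxpos), one_smul]
        have h2 : δ ≤ (f x - f 0) / ‖x‖ := by
          simpa [hgdef, hxv] using h1
        rw [le_div_iff₀ hxpos] at h2
        linarith
      -- conclude boundedness
      rw [isBounded_iff_forall_norm_le]
      refine ⟨max T ((a - f 0) / δ), fun x hx => ?_⟩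
      by_contra hcon
      push_neg at hcon
      have h1 : T ≤ ‖x‖ := le_of_lt (lt_of_le_of_lt (le_max_left _ _) hcon)
      have h2 : (a - f 0) / δ < ‖x‖ := lt_of_le_of_lt (le_max_right _ _) hcon
      have h3 : a - f 0 < δ * ‖x‖ := by
        rw [div_lt_iff₀ hδpos] at h2; linarith [mul_comm δ ‖x‖]
      have h4 := hlb x h1
      have h5 : f x ≤ a := hx
      linarith
  -- reverse: bounded sublevel sets imply positive slopes
  have rev : (∀ a : ℝ, Bornology.IsBounded {x : E | f x ≤ a}) →
      ∀ v : E, ‖v‖ = 1 → 0 < s v := by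
    intro hb v hv
    by_contra hcon
    push_neg at hcon
    obtain ⟨R, hR⟩ := isBounded_iff_forall_norm_le.1 (hb (f 0))
    set t : ℝ := max (R + 1) 1 with ht
    have htpos : (0 : ℝ) < t := lt_of_lt_of_le one_pos (le_max_right _ _)
    have h1 : g t v ≤ s v := hle v t htpos
    have h2 : f (t • v) ≤ f 0 := by
      have : (f (t • v) - f 0) / t ≤ 0 := le_trans h1 hcon
      have := (div_nonpos_iff.1 this)
      rcases this with ⟨h, _⟩ | ⟨_, h⟩
      · linarith
      · linarith
    have h3 : ‖t • v‖ ≤ R := hR _ h2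
    have h4 : ‖t • v‖ = t := by
      rw [norm_smul, hv, mul_one, Real.norm_eq_abs, abs_of_pos htpos]
    have h5 : R + 1 ≤ t := le_max_left _ _
    linarith [h4 ▸ h3]
  -- closedness of sublevel sets
  have hclosed : ∀ a : ℝ, IsClosed {x : E | f x ≤ a} := fun a =>
    isClosed_Iic.preimage hfc
  refine ⟨⟨key, rev⟩, ⟨fun hpos a => ?_, fun hc => rev fun a => (hc a).isBounded⟩, ?_⟩
  · exact Metric.isCompact_of_isClosed_isBounded (hclosed a) (key hpos a)
  · intro hpos
    have hcomp : IsCompact {x : E | f x ≤ f 0} :=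
      Metric.isCompact_of_isClosed_isBounded (hclosed _) (key hpos _)
    have hne : ({x : E | f x ≤ f 0}).Nonempty := ⟨0, by simp⟩
    obtain ⟨x, hxmem, hxmin⟩ := hcomp.exists_isMinOn hne hfc.continuousOn
    refine ⟨x, fun z => ?_⟩
    by_cases hz : f z ≤ f 0
    · exact hxmin hz
    · exact le_trans (hxmin (le_refl (f 0) : (0 : E) ∈ _)) (le_of_not_ge hz)
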